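/- Let G be a maximally almost periodic group. Then the character δ_e (which takes value 1 at the identity and 0 elsewhere) is a pointwise limit of traces of finite-dimensional representations: for every ε > 0 and every finite subset F ⊆ G, there exist n ≥ 1 and a group homomorphism π from G to the group of unitary n×n complex matrices such that |δ_e(g) − (1/n)·Tr(π(g))| ≤ ε for all g ∈ F (equivalently, |(1/n)·Tr(π(g))| ≤ ε for every g ∈ F with g ≠ 1). -/

import Mathlib

open scoped Classical
open Matrix
open scoped Kronecker

namespace MAPaux

variable {G : Type*} [Group G]

lemma col_normSq {n : ℕ} {U : Matrix (Fin n) (Fin n) ℂ}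
    (hU : U ∈ Matrix.unitaryGroup (Fin n) ℂ) (j : Fin n) :
    ∑ i, Complex.normSq (U i j) = 1 := by
  have h : star U * U = 1 := (Unitary.mem_iff.mp hU).1
  have h2 := Matrix.ext_iff.mpr h j j
  rw [Matrix.mul_apply, Matrix.one_apply_eq] at h2
  have h3 : ∀ i, (star U) j i * U i j = (Complex.normSq (U i j) : ℂ) := by
    intro i
    rw [Matrix.star_apply, Complex.star_def]
    exact Complex.normSq_eq_conj_mul_self.symm
  rw [Finset.sum_congr rfl fun i _ => h3 i] at h2
  exact_mod_cast h2

lemma entry_abs_le {n : ℕ} {U : Matrix (Fin n) (Fin n) ℂ}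
    (hU : U ∈ Matrix.unitaryGroup (Fin n) ℂ) (i j : Fin n) :
    norm (U i j) ≤ 1 := by
  have h := col_normSq hU j
  have h1 : Complex.normSq (U i j) ≤ 1 := by
    rw [← h]
    exact Finset.single_le_sum (f := fun k => Complex.normSq (U k j))
      (fun k _ => Complex.normSq_nonneg _) (Finset.mem_univ i)
  have h2 : (norm (U i j)) ^ 2 = Complex.normSq (U i j) := Complex.sq_norm _
  nlinarith [norm_nonneg (U i j)]

lemma trace_abs_le {n : ℕ} {U : Matrix (Fin n) (Fin n) ℂ}
    (hU : U ∈ Matrix.unitaryGroup (Fin n) ℂ) :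
    norm (Matrix.trace U) ≤ n := by
  calc norm (Matrix.trace U) ≤ ∑ i, norm (U i i) :=
        norm_sum_le _ _
    _ ≤ ∑ _i : Fin n, (1 : ℝ) := Finset.sum_le_sum fun i _ => entry_abs_le hU i i
    _ = n := by simp

/-- Strict: if the trace of a unitary shifted by 1 attains the max modulus, U = 1. -/
lemma eq_one_of_max_trace {n : ℕ} {U : Matrix (Fin n) (Fin n) ℂ}
    (hU : U ∈ Matrix.unitaryGroup (Fin n) ℂ)
    (h : (n : ℝ) + 1 ≤ norm (Matrix.trace U + 1)) : U = 1 := by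
  set t := Matrix.trace U with ht
  have habs : norm t ≤ n := trace_abs_le hU
  have hre : (n : ℝ) ≤ t.re := by
    have h1 : Complex.normSq (t + 1) = (t.re + 1) ^ 2 + t.im ^ 2 := by
      simp [Complex.normSq_apply]; ring
    have h2 : (norm (t + 1)) ^ 2 = Complex.normSq (t + 1) := Complex.sq_norm _
    have h3 : (norm t) ^ 2 = t.re ^ 2 + t.im ^ 2 := by
      rw [Complex.sq_norm, Complex.normSq_apply]; ring
    nlinarith [norm_nonneg (t + 1), norm_nonneg t]
  -- each diagonal real part is 1
  have hrele : ∀ i : Fin n, (U i i).re ≤ 1 := fun i =>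
    (Complex.re_le_norm _).trans (entry_abs_le hU i i)
  have hsum : ∑ i, (U i i).re = t.re := by
    rw [ht, Matrix.trace]
    exact (Complex.re_sum _ _).symm
  have hsumn : ∑ i, (U i i).re = (n : ℝ) := by
    have hle : ∑ i, (U i i).re ≤ (n : ℝ) := by
      calc ∑ i, (U i i).re ≤ ∑ _i : Fin n, (1 : ℝ) := Finset.sum_le_sum fun i _ => hrele i
        _ = n := by simp
    have hge : (n : ℝ) ≤ ∑ i, (U i i).re := hsum ▸ hre
    linarith
  have hdiagre : ∀ i : Fin n, (U i i).re = 1 := by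
    intro i
    have hconst : ∑ _i : Fin n, (1 : ℝ) = (n : ℝ) := by simp
    have := (Finset.sum_eq_sum_iff_of_le (fun i _ => hrele i)).mp
      (hsumn.trans hconst.symm)
    simpa using this i (Finset.mem_univ i)
  have hdiag : ∀ i : Fin n, U i i = 1 := by
    intro i
    have h1 : Complex.normSq (U i i) ≤ 1 := by
      have := entry_abs_le hU i i
      have h2 : (norm (U i i)) ^ 2 = Complex.normSq (U i i) := Complex.sq_norm _
      nlinarith [norm_nonneg (U i i)]
    have h2 : (U i i).im = 0 := by
      have h3 : Complex.normSq (U i i) = 1 + (U i i).im ^ 2 := by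
        rw [Complex.normSq_apply, hdiagre i]; ring
      nlinarith
    exact Complex.ext (hdiagre i) h2
  ext i j
  by_cases hij : i = j
  · subst hij; rw [hdiag i, Matrix.one_apply_eq]
  · rw [Matrix.one_apply_ne hij]
    have hcol := col_normSq hU j
    have hsplit : Complex.normSq (U j j) + ∑ i ∈ Finset.univ.erase j, Complex.normSq (U i j) = 1 := by
      rw [← hcol]
      exact Finset.add_sum_erase Finset.univ (fun i => Complex.normSq (U i j))
        (Finset.mem_univ j)
    rw [hdiag j] at hsplit
    simp only [Complex.normSq_one] at hsplit
    have hzero : ∑ i ∈ Finset.univ.erase j, Complex.normSq (U i j) = 0 := by linarith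
    have := (Finset.sum_eq_zero_iff_of_nonneg (fun k _ => Complex.normSq_nonneg _)).mp hzero
    have h4 := this i (Finset.mem_erase.mpr ⟨hij, Finset.mem_univ i⟩)
    exact Complex.normSq_eq_zero.mp h4

lemma star_kron {n m : ℕ} (A : Matrix (Fin n) (Fin n) ℂ) (B : Matrix (Fin m) (Fin m) ℂ) :
    star (A ⊗ₖ B) = star A ⊗ₖ star B := by
  ext ⟨i, j⟩ ⟨k, l⟩
  simp [Matrix.star_apply, Matrix.kroneckerMap_apply, mul_comm]

lemma kron_mem {n m : ℕ} {A : Matrix (Fin n) (Fin n) ℂ} {B : Matrix (Fin m) (Fin m) ℂ}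
    (hA : A ∈ Matrix.unitaryGroup (Fin n) ℂ) (hB : B ∈ Matrix.unitaryGroup (Fin m) ℂ) :
    Matrix.reindexAlgEquiv ℂ ℂ finProdFinEquiv (A ⊗ₖ B) ∈ Matrix.unitaryGroup (Fin (n * m)) ℂ := by
  rw [Matrix.mem_unitaryGroup_iff]
  have hstar : star (Matrix.reindexAlgEquiv ℂ ℂ finProdFinEquiv (A ⊗ₖ B)) =
      Matrix.reindexAlgEquiv ℂ ℂ finProdFinEquiv (star A ⊗ₖ star B) := by
    rw [← star_kron]
    simp only [Matrix.reindexAlgEquiv_apply, Matrix.star_eq_conjTranspose,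
      Matrix.conjTranspose_reindex]
  rw [hstar, ← _root_.map_mul, ← Matrix.mul_kronecker_mul,
    (Matrix.mem_unitaryGroup_iff.mp hA), (Matrix.mem_unitaryGroup_iff.mp hB),
    Matrix.one_kronecker_one, _root_.map_one]

/-- Kronecker product of two unitary representations. -/
def kron {n m : ℕ} (π : G →* Matrix.unitaryGroup (Fin n) ℂ)
    (ρ : G →* Matrix.unitaryGroup (Fin m) ℂ) :
    G →* Matrix.unitaryGroup (Fin (n * m)) ℂ where
  toFun g := ⟨Matrix.reindexAlgEquiv ℂ ℂ finProdFinEquiv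
      ((π g : Matrix (Fin n) (Fin n) ℂ) ⊗ₖ (ρ g : Matrix (Fin m) (Fin m) ℂ)),
    kron_mem (π g).2 (ρ g).2⟩
  map_one' := by
    refine Subtype.ext ?_
    show Matrix.reindexAlgEquiv ℂ ℂ finProdFinEquiv _ = _
    rw [_root_.map_one π, _root_.map_one ρ, OneMemClass.coe_one, OneMemClass.coe_one,
      Matrix.one_kronecker_one, _root_.map_one, OneMemClass.coe_one]
  map_mul' g h := by
    refine Subtype.ext ?_
    show Matrix.reindexAlgEquiv ℂ ℂ finProdFinEquiv _ = _
    rw [MulMemClass.coe_mul, _root_.map_mul π, _root_.map_mul ρ,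
      MulMemClass.coe_mul, MulMemClass.coe_mul, Matrix.mul_kronecker_mul,
      _root_.map_mul]

lemma trace_reindex {α : Type*} [AddCommMonoid α] {k l : Type*} [Fintype k] [Fintype l]
    (e : k ≃ l) (M : Matrix k k α) :
    Matrix.trace (Matrix.reindex e e M) = Matrix.trace M := by
  rw [Matrix.trace, Matrix.trace]
  simp only [Matrix.reindex_apply, Matrix.diag_apply, Matrix.submatrix_apply]
  exact Equiv.sum_comp e.symm fun i => M i i

lemma trace_kron {n m : ℕ} (π : G →* Matrix.unitaryGroup (Fin n) ℂ)
    (ρ : G →* Matrix.unitaryGroup (Fin m) ℂ) (g : G) :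
    Matrix.trace ((kron π ρ) g : Matrix (Fin (n * m)) (Fin (n * m)) ℂ) =
      Matrix.trace (π g : Matrix (Fin n) (Fin n) ℂ) *
        Matrix.trace (ρ g : Matrix (Fin m) (Fin m) ℂ) := by
  show Matrix.trace (Matrix.reindexAlgEquiv ℂ ℂ finProdFinEquiv _) = _
  rw [Matrix.reindexAlgEquiv_apply, trace_reindex, Matrix.trace_kronecker]

lemma addTriv_mem {n : ℕ} {A : Matrix (Fin n) (Fin n) ℂ}
    (hA : A ∈ Matrix.unitaryGroup (Fin n) ℂ) :
    Matrix.reindexAlgEquiv ℂ ℂ finSumFinEquiv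
      (Matrix.fromBlocks A 0 0 (1 : Matrix (Fin 1) (Fin 1) ℂ)) ∈
        Matrix.unitaryGroup (Fin (n + 1)) ℂ := by
  rw [Matrix.mem_unitaryGroup_iff]
  have hstar : star (Matrix.reindexAlgEquiv ℂ ℂ finSumFinEquiv
      (Matrix.fromBlocks A 0 0 (1 : Matrix (Fin 1) (Fin 1) ℂ))) =
      Matrix.reindexAlgEquiv ℂ ℂ finSumFinEquiv
        (Matrix.fromBlocks (star A) 0 0 (1 : Matrix (Fin 1) (Fin 1) ℂ)) := by
    simp only [Matrix.reindexAlgEquiv_apply, Matrix.star_eq_conjTranspose,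
      Matrix.conjTranspose_reindex, Matrix.fromBlocks_conjTranspose]
    congr 1
    simp
  rw [hstar, ← _root_.map_mul, Matrix.fromBlocks_multiply]
  simp only [Matrix.mul_zero, Matrix.zero_mul, add_zero, zero_add, mul_one,
    Matrix.mem_unitaryGroup_iff.mp hA]
  rw [Matrix.fromBlocks_one, _root_.map_one]

/-- Direct sum with the 1-dimensional trivial representation. -/
def addTriv {n : ℕ} (π : G →* Matrix.unitaryGroup (Fin n) ℂ) :
    G →* Matrix.unitaryGroup (Fin (n + 1)) ℂ where
  toFun g := ⟨Matrix.reindexAlgEquiv ℂ ℂ finSumFinEquiv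
      (Matrix.fromBlocks (π g : Matrix (Fin n) (Fin n) ℂ) 0 0 (1 : Matrix (Fin 1) (Fin 1) ℂ)),
    addTriv_mem (π g).2⟩
  map_one' := by
    refine Subtype.ext ?_
    show Matrix.reindexAlgEquiv ℂ ℂ finSumFinEquiv _ = _
    rw [_root_.map_one π, OneMemClass.coe_one, Matrix.fromBlocks_one,
      _root_.map_one, OneMemClass.coe_one]
  map_mul' g h := by
    refine Subtype.ext ?_
    show Matrix.reindexAlgEquiv ℂ ℂ finSumFinEquiv _ = _
    rw [MulMemClass.coe_mul, ← _root_.map_mul, Matrix.fromBlocks_multiply]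
    simp [_root_.map_mul π]

lemma trace_fromBlocks' {n m : ℕ} (A : Matrix (Fin n) (Fin n) ℂ)
    (B : Matrix (Fin n) (Fin m) ℂ) (C : Matrix (Fin m) (Fin n) ℂ)
    (D : Matrix (Fin m) (Fin m) ℂ) :
    Matrix.trace (Matrix.fromBlocks A B C D) = Matrix.trace A + Matrix.trace D := by
  simp [Matrix.trace, Matrix.diag, Fintype.sum_sum_type]

lemma trace_addTriv {n : ℕ} (π : G →* Matrix.unitaryGroup (Fin n) ℂ) (g : G) :
    Matrix.trace ((addTriv π) g : Matrix (Fin (n + 1)) (Fin (n + 1)) ℂ) =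
      Matrix.trace (π g : Matrix (Fin n) (Fin n) ℂ) + 1 := by
  show Matrix.trace (Matrix.reindexAlgEquiv ℂ ℂ finSumFinEquiv _) = _
  rw [Matrix.reindexAlgEquiv_apply, trace_reindex, trace_fromBlocks']
  simp

/-- Kronecker powers, packaged existentially. -/
lemma pow_exists {m : ℕ} (ρ : G →* Matrix.unitaryGroup (Fin m) ℂ) (k : ℕ) :
    ∃ N : ℕ, N = m ^ k ∧ ∃ σ : G →* Matrix.unitaryGroup (Fin N) ℂ,
      ∀ h : G, Matrix.trace (σ h : Matrix (Fin N) (Fin N) ℂ) =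
        (Matrix.trace (ρ h : Matrix (Fin m) (Fin m) ℂ)) ^ k := by
  induction k with
  | zero =>
    refine ⟨1, (pow_zero m).symm, 1, fun h => ?_⟩
    simp
  | succ k ih =>
    obtain ⟨N, hN, σ, hσ⟩ := ih
    refine ⟨N * m, by rw [hN, pow_succ], kron σ ρ, fun h => ?_⟩
    rw [trace_kron, hσ, pow_succ]

/-- Per-element: a representation whose normalized trace at `g` is at most `ε`,
and which is a contraction everywhere. -/
lemma good_rep (ε : ℝ) (hε : 0 < ε) {g : G} (hg : g ≠ 1)
    (hMAP : ∀ g : G, g ≠ 1 →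
      ∃ n : ℕ, 1 ≤ n ∧ ∃ π : G →* Matrix.unitaryGroup (Fin n) ℂ, π g ≠ 1) :
    ∃ N : ℕ, 1 ≤ N ∧ ∃ σ : G →* Matrix.unitaryGroup (Fin N) ℂ,
      norm (Matrix.trace (σ g : Matrix (Fin N) (Fin N) ℂ)) ≤ ε * N := by
  obtain ⟨n, hn, π, hπ⟩ := hMAP g hg
  have hmat : (π g : Matrix (Fin n) (Fin n) ℂ) ≠ 1 := by
    intro h
    exact hπ (Subtype.ext (by simpa using h))
  -- strict contraction at g for addTriv π
  have hstrict : norm (Matrix.trace ((addTriv π) g :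
      Matrix (Fin (n + 1)) (Fin (n + 1)) ℂ)) < (n : ℝ) + 1 := by
    rw [trace_addTriv]
    by_contra hcon
    push_neg at hcon
    exact hmat (eq_one_of_max_trace (π g).2 hcon)
  set c : ℝ := norm (Matrix.trace ((addTriv π) g :
      Matrix (Fin (n + 1)) (Fin (n + 1)) ℂ)) / (n + 1) with hc
  have hm1 : (0 : ℝ) < (n : ℝ) + 1 := by positivity
  have hc0 : 0 ≤ c := by positivity
  have hc1 : c < 1 := by
    rw [hc, div_lt_one hm1]
    exact hstrict
  obtain ⟨k, hk⟩ := exists_pow_lt_of_lt_one hε hc1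
  obtain ⟨N, hNe, σ, hσ⟩ := pow_exists (addTriv π) k
  have hN1 : 1 ≤ N := by
    rw [hNe]
    exact Nat.one_le_pow _ _ (by omega)
  refine ⟨N, hN1, σ, ?_⟩
  rw [hσ, norm_pow]
  have hNr : (N : ℝ) = ((n : ℝ) + 1) ^ k := by
    rw [hNe]
    push_cast
    ring
  calc norm (Matrix.trace ((addTriv π) g :
        Matrix (Fin (n + 1)) (Fin (n + 1)) ℂ)) ^ k
      = (c * ((n : ℝ) + 1)) ^ k := by
        rw [hc, div_mul_cancel₀ _ (ne_of_gt hm1)]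
    _ = c ^ k * ((n : ℝ) + 1) ^ k := mul_pow _ _ _
    _ ≤ ε * ((n : ℝ) + 1) ^ k := by
        apply mul_le_mul_of_nonneg_right (le_of_lt hk) (by positivity)
    _ = ε * N := by rw [hNr]

/-- Combine over a finite set of non-identity elements. -/
lemma combine (ε : ℝ) (hε : 0 < ε)
    (hMAP : ∀ g : G, g ≠ 1 →
      ∃ n : ℕ, 1 ≤ n ∧ ∃ π : G →* Matrix.unitaryGroup (Fin n) ℂ, π g ≠ 1)
    (F : Finset G) (hF : ∀ g ∈ F, g ≠ 1) :
    ∃ n : ℕ, 1 ≤ n ∧ ∃ π : G →* Matrix.unitaryGroup (Fin n) ℂ,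
      ∀ g ∈ F, norm (Matrix.trace (π g : Matrix (Fin n) (Fin n) ℂ)) ≤ ε * n := by
  induction F using Finset.induction_on with
  | empty => exact ⟨1, le_refl 1, 1, fun g hg => absurd hg (Finset.notMem_empty g)⟩
  | insert _ _ hnotmem =>
    rename_i a s ih
    obtain ⟨n, hn, π, hπ⟩ := ih fun g hg => hF g (Finset.mem_insert_of_mem hg)
    have ha : a ≠ 1 := hF a (Finset.mem_insert_self a s)
    obtain ⟨N, hN, σ, hσ⟩ := good_rep ε hε ha hMAP
    refine ⟨n * N, Nat.one_le_iff_ne_zero.mpr (by positivity), kron π σ, fun g hg => ?_⟩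
    rw [trace_kron, norm_mul]
    rcases Finset.mem_insert.mp hg with h | h
    · subst h
      calc norm (Matrix.trace (π g : Matrix (Fin n) (Fin n) ℂ)) *
            norm (Matrix.trace (σ g : Matrix (Fin N) (Fin N) ℂ))
          ≤ (n : ℝ) * (ε * N) := by
            apply mul_le_mul (trace_abs_le (π g).2) hσ (norm_nonneg _)
              (Nat.cast_nonneg n)
        _ = ε * (↑(n * N)) := by push_cast; ring
    · calc norm (Matrix.trace (π g : Matrix (Fin n) (Fin n) ℂ)) *
            norm (Matrix.trace (σ g : Matrix (Fin N) (Fin N) ℂ))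
          ≤ (ε * n) * N := by
            apply mul_le_mul (hπ g h) (trace_abs_le (σ g).2) (norm_nonneg _)
              (by positivity)
        _ = ε * (↑(n * N)) := by push_cast; ring

end MAPaux

/-- If `G` is maximally almost periodic (finite-dimensional unitary
representations separate the points of `G`), then the character `δ_e` is a
pointwise limit of normalized traces of finite-dimensional unitary
representations. -/
theorem map_group_delta_fd_trace_limit {G : Type*} [Group G]
    (hMAP : ∀ g : G, g ≠ 1 →
      ∃ n : ℕ, 1 ≤ n ∧ ∃ π : G →* Matrix.unitaryGroup (Fin n) ℂ, π g ≠ 1) :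
    ∀ ε > (0 : ℝ), ∀ F : Finset G,
      ∃ n : ℕ, 1 ≤ n ∧
        ∃ π : G →* Matrix.unitaryGroup (Fin n) ℂ,
          ∀ g ∈ F,
            ‖(if g = 1 then (1 : ℂ) else 0) -
              Matrix.trace ((π g : Matrix (Fin n) (Fin n) ℂ)) / n‖ ≤ ε := by
  intro ε hε F
  obtain ⟨n, hn, π, hπ⟩ := MAPaux.combine ε hε hMAP (F.filter (· ≠ 1))
    (fun g hg => (Finset.mem_filter.mp hg).2)
  have hnR : (0 : ℝ) < n := by exact_mod_cast hn
  have hnC : (n : ℂ) ≠ 0 := by exact_mod_cast hnR.ne'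
  refine ⟨n, hn, π, fun g hg => ?_⟩
  by_cases h1 : g = 1
  · subst h1
    rw [if_pos rfl]
    have : ((π 1 : Matrix (Fin n) (Fin n) ℂ)) = 1 := by
      rw [_root_.map_one π, OneMemClass.coe_one]
    rw [this, Matrix.trace_one]
    simp only [Fintype.card_fin]
    rw [div_self hnC, sub_self, norm_zero]
    exact le_of_lt hε
  · rw [if_neg h1, zero_sub, norm_neg, norm_div]
    have hb := hπ g (Finset.mem_filter.mpr ⟨hg, h1⟩)
    have habsn : ‖(n : ℂ)‖ = n := by
      simp
    rw [habsn, div_le_iff₀ hnR]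
    linarith [hb]
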